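/- Let (a_m) be the integer sequence defined by a_0 = a_1 = 1, a_2 = 2, and a_m = 5a_{m-1} − 6a_{m-2} + a_{m-3} for m ≥ 3. Then for all integers j ≥ 0: D_5(0, 2j) = a_j, D_5(1, 2j+1) = a_{j+1}, D_5(2, 2j+2) = a_{j+2} − a_{j+1}, D_5(3, 2j+3) = a_{j+3} − 2a_{j+2}, D_5(4, 2j+4) = a_{j+4} − 3a_{j+3} + a_{j+2}, and D_5(5, 2j+5) = a_{j+4} − 3a_{j+3} + a_{j+2}. -/
import Mathlib


/-- Number of directed paths from `(0,0)` to `(j,i)` in the Bratteli diagram for `SU(2)_k`. -/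
def bratteliD (k : ℕ) : ℕ → ℕ → ℕ
  | i, 0 => if i = 0 then 1 else 0
  | i, j + 1 =>
      if i ≤ k then
        (if 1 ≤ i then bratteliD k (i - 1) j else 0) +
        (if i + 1 ≤ k then bratteliD k (i + 1) j else 0)
      else 0

/-- The sequence `a_0 = a_1 = 1`, `a_2 = 2`, `a_m = 5a_{m-1} - 6a_{m-2} + a_{m-3}`. -/
def seqA : ℕ → ℤ
  | 0 => 1
  | 1 => 1
  | 2 => 2
  | m + 3 => 5 * seqA (m + 2) - 6 * seqA (m + 1) + seqA m

lemma bD0 (n : ℕ) : bratteliD 5 0 (n+1) = bratteliD 5 1 n := by simp [bratteliD]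
lemma bD1 (n : ℕ) : bratteliD 5 1 (n+1) = bratteliD 5 0 n + bratteliD 5 2 n := by
  simp [bratteliD]
lemma bD2 (n : ℕ) : bratteliD 5 2 (n+1) = bratteliD 5 1 n + bratteliD 5 3 n := by
  simp [bratteliD]
lemma bD3 (n : ℕ) : bratteliD 5 3 (n+1) = bratteliD 5 2 n + bratteliD 5 4 n := by
  simp [bratteliD]
lemma bD4 (n : ℕ) : bratteliD 5 4 (n+1) = bratteliD 5 3 n + bratteliD 5 5 n := by
  simp [bratteliD]
lemma bD5 (n : ℕ) : bratteliD 5 5 (n+1) = bratteliD 5 4 n := by simp [bratteliD]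

lemma seqA_rec (m : ℕ) : seqA (m+3) = 5 * seqA (m + 2) - 6 * seqA (m + 1) + seqA m := rfl

theorem bratteliD_five_values (j : ℕ) :
    (bratteliD 5 0 (2 * j) : ℤ) = seqA j ∧
    (bratteliD 5 1 (2 * j + 1) : ℤ) = seqA (j + 1) ∧
    (bratteliD 5 2 (2 * j + 2) : ℤ) = seqA (j + 2) - seqA (j + 1) ∧
    (bratteliD 5 3 (2 * j + 3) : ℤ) = seqA (j + 3) - 2 * seqA (j + 2) ∧
    (bratteliD 5 4 (2 * j + 4) : ℤ) = seqA (j + 4) - 3 * seqA (j + 3) + seqA (j + 2) ∧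
    (bratteliD 5 5 (2 * j + 5) : ℤ) = seqA (j + 4) - 3 * seqA (j + 3) + seqA (j + 2) := by
  induction j with
  | zero =>
      norm_num [bratteliD, seqA]
  | succ j ih =>
      obtain ⟨h0, h1, h2, h3, h4, h5⟩ := ih
      have e0 : 2 * (j+1) = (2*j+1) + 1 := by ring
      have e1 : 2 * (j+1) + 1 = (2*j+2) + 1 := by ring
      have e2 : 2 * (j+1) + 2 = (2*j+3) + 1 := by ring
      have e3 : 2 * (j+1) + 3 = (2*j+4) + 1 := by ring
      have e4 : 2 * (j+1) + 4 = (2*j+5) + 1 := by ring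
      have e5 : 2 * (j+1) + 5 = (2*j+6) + 1 := by ring
      have n0 : (bratteliD 5 0 (2*(j+1)) : ℤ) = seqA (j+1) := by
        rw [e0, bD0]; exact h1
      have n1 : (bratteliD 5 1 (2*(j+1)+1) : ℤ) = seqA (j+2) := by
        rw [e1, bD1]
        push_cast
        rw [show (2*j+2 : ℕ) = 2*(j+1) from by ring] at *
        rw [n0]
        linarith
      have n2 : (bratteliD 5 2 (2*(j+1)+2) : ℤ) = seqA (j+3) - seqA (j+2) := by
        rw [e2, bD2]
        push_cast
        rw [show (2*j+3 : ℕ) = 2*(j+1)+1 from by ring] at h3 ⊢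
        rw [n1]
        linarith
      have n3 : (bratteliD 5 3 (2*(j+1)+3) : ℤ) = seqA (j+4) - 2 * seqA (j+3) := by
        rw [e3, bD3]
        push_cast
        rw [show (2*j+4 : ℕ) = 2*(j+1)+2 from by ring] at h4 ⊢
        rw [n2]
        linarith
      have n4 : (bratteliD 5 4 (2*(j+1)+4) : ℤ) = seqA (j+5) - 3 * seqA (j+4) + seqA (j+3) := by
        rw [e4, bD4]
        push_cast
        rw [show (2*j+5 : ℕ) = 2*(j+1)+3 from by ring] at h5 ⊢
        rw [n3]
        have hr := seqA_rec (j+2)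
        rw [show (j+2+3 : ℕ) = j+5 from by ring, show (j+2+2 : ℕ) = j+4 from by ring,
          show (j+2+1 : ℕ) = j+3 from by ring] at hr
        linarith
      have n5 : (bratteliD 5 5 (2*(j+1)+5) : ℤ) = seqA (j+5) - 3 * seqA (j+4) + seqA (j+3) := by
        rw [e5, bD5]
        rw [show (2*j+6 : ℕ) = 2*(j+1)+4 from by ring]
        exact n4
      refine ⟨n0, ?_, ?_, ?_, ?_, ?_⟩ <;>
        simp only [show (j+1+1 : ℕ) = j+2 from rfl, show (j+1+2 : ℕ) = j+3 from rfl,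
          show (j+1+3 : ℕ) = j+4 from rfl, show (j+1+4 : ℕ) = j+5 from rfl]
      exacts [n1, n2, n3, n4, n5]
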